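/- Spin decoupling of the free-fermion Hamiltonian algebra: let S_u = {→X_{u(k)}X_{u(l)}, →Y_{u(k)}Y_{u(l)} : (k,l) an edge of G} and S_d = {→X_{d(k)}X_{d(l)}, →Y_{d(k)}Y_{d(l)} : (k,l) an edge of G}, so S₀ = S_u ∪ S_d. Then every element of g(S_u) commutes with every element of g(S_d), g(S₀) = g(S_u) ⊔ g(S_d) (supremum of Lie subalgebras), the intersection g(S_u) ⊓ g(S_d) is trivial, and dim g(S₀) = dim g(S_u) + dim g(S_d). -/

import Mathlib

open Matrix

attribute [local instance 100] LieRing.ofAssociativeRing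

/-- The four 2×2 Pauli matrices: identity, X, Y, Z. -/
noncomputable def pauli : Fin 4 → Matrix (Fin 2) (Fin 2) ℂ
  | 0 => 1
  | 1 => !![0, 1; 1, 0]
  | 2 => !![0, -Complex.I; Complex.I, 0]
  | 3 => !![1, 0; 0, -1]

/-- The matrix of an `n`-qubit Pauli string `p : Fin n → Fin 4`,
the Kronecker product of the `pauli (p i)`. -/
noncomputable def PauliMat {n : ℕ} (p : Fin n → Fin 4) :
    Matrix (Fin n → Fin 2) (Fin n → Fin 2) ℂ :=
  Matrix.of fun x y => ∏ i, pauli (p i) (x i) (y i)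

/-- The Hamiltonian algebra of a set of Pauli strings: the Lie ℝ-subalgebra of the
complex matrices generated by `{I • P(p) : p ∈ S}`. -/
noncomputable def hamAlg {n : ℕ} (S : Set (Fin n → Fin 4)) :
    LieSubalgebra ℝ (Matrix (Fin n → Fin 2) (Fin n → Fin 2) ℂ) :=
  LieSubalgebra.lieSpan ℝ _ ((fun p => Complex.I • PauliMat p) '' S)

/-- The Pauli string `→A_iB_j`: letter `A` at `i`, letter `B` at `j`, `Z` strictly
between `i` and `j`, identity elsewhere. -/
def ladderString {n : ℕ} (i j : Fin n) (A B : Fin 4) : Fin n → Fin 4 :=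
  fun k => if k = i then A else if k = j then B
    else if min i j < k ∧ k < max i j then 3 else 0

/-- The Pauli string `Z_kZ_l`. -/
def zzString {n : ℕ} (k l : Fin n) : Fin n → Fin 4 :=
  fun m => if m = k ∨ m = l then 3 else 0

/-- The Pauli string `Z_k`. -/
def zString {n : ℕ} (k : Fin n) : Fin n → Fin 4 :=
  fun m => if m = k then 3 else 0

/-- A choice of letter: `X` if `c = 0`, `Y` if `c = 1`. -/
def ltr (c : Fin 2) : Fin 4 := if c = 0 then 1 else 2

/-- The opposite letter: `Y` if `c = 0`, `X` if `c = 1`. -/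
def ltrBar (c : Fin 2) : Fin 4 := if c = 0 then 2 else 1

/-- Pauli strings of the Jordan–Wigner transformed hopping terms of one spin species,
with sites embedded via `v : Fin N → Fin (2N)` and hoppings on the edges of `G`. -/
def Sspin {N : ℕ} (G : SimpleGraph (Fin N)) (v : Fin N → Fin (2 * N)) :
    Set (Fin (2 * N) → Fin 4) :=
  {p | ∃ k l : Fin N, G.Adj k l ∧
    (p = ladderString (v k) (v l) 1 1 ∨ p = ladderString (v k) (v l) 2 2)}

/-- Pauli strings of the Jordan–Wigner transformed free fermion model. -/
def Sfree {N : ℕ} (G : SimpleGraph (Fin N)) (u d : Fin N → Fin (2 * N)) :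
    Set (Fin (2 * N) → Fin 4) :=
  Sspin G u ∪ Sspin G d

/-- Pauli strings of the model with a single on-site Coulomb interaction at fermion
site `i0` (interaction term `Z_{u i0} Z_{d i0}`). -/
def Sint {N : ℕ} (G : SimpleGraph (Fin N)) (u d : Fin N → Fin (2 * N)) (i0 : Fin N) :
    Set (Fin (2 * N) → Fin 4) :=
  Sfree G u d ∪ {zzString (u i0) (d i0)}


/-! ### Auxiliary machinery -/

/-- Pauli product letter table. -/
def pmul : Fin 4 → Fin 4 → Fin 4 :=
  ![![0,1,2,3], ![1,0,3,2], ![2,3,0,1], ![3,2,1,0]]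

/-- Pauli product phase table. -/
noncomputable def pphase : Fin 4 → Fin 4 → ℂ :=
  ![![1,1,1,1], ![1,1,Complex.I,-Complex.I], ![1,-Complex.I,1,Complex.I],
    ![1,Complex.I,-Complex.I,1]]

noncomputable def sgn (a b : Fin 4) : ℂ := if a ≠ 0 ∧ b ≠ 0 ∧ a ≠ b then -1 else 1

noncomputable def w {n : ℕ} (x y : Fin n) : ℂ := if x < y then -1 else 1

def xbit : Fin 4 → ZMod 2 := ![0, 1, 1, 0]
def zbit : Fin 4 → ZMod 2 := ![0, 0, 1, 1]

lemma pauli_mul (a b : Fin 4) : pauli a * pauli b = pphase a b • pauli (pmul a b) := by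
  fin_cases a <;> fin_cases b <;>
    · ext i j
      fin_cases i <;> fin_cases j <;>
        simp [pauli, pmul, pphase, Matrix.mul_apply, Fin.sum_univ_two, Complex.ext_iff,
          Matrix.vecHead, Matrix.vecTail]

lemma PauliMat_mul {n : ℕ} (p q : Fin n → Fin 4) :
    PauliMat p * PauliMat q
      = (∏ i, pphase (p i) (q i)) • PauliMat (fun i => pmul (p i) (q i)) := by
  ext x y
  simp only [Matrix.mul_apply, PauliMat, Matrix.of_apply, Matrix.smul_apply, smul_eq_mul]
  calc ∑ z : Fin n → Fin 2, (∏ i, pauli (p i) (x i) (z i)) * ∏ i, pauli (q i) (z i) (y i)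
      = ∑ z : Fin n → Fin 2, ∏ i, (pauli (p i) (x i) (z i) * pauli (q i) (z i) (y i)) := by
        simp [Finset.prod_mul_distrib]
    _ = ∏ i, ∑ t : Fin 2, (pauli (p i) (x i) t * pauli (q i) t (y i)) :=
        (Fintype.prod_sum fun i t => pauli (p i) (x i) t * pauli (q i) t (y i)).symm
    _ = ∏ i, (pphase (p i) (q i) * pauli (pmul (p i) (q i)) (x i) (y i)) := by
        refine Finset.prod_congr rfl fun i _ => ?_
        have := congrArg (fun M => M (x i) (y i)) (pauli_mul (p i) (q i))
        simpa [Matrix.mul_apply, Matrix.smul_apply] using this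
    _ = _ := Finset.prod_mul_distrib

lemma trace_PauliMat {n : ℕ} (p : Fin n → Fin 4) :
    (PauliMat p).trace = ∏ i, (pauli (p i)).trace := by
  simp only [Matrix.trace, Matrix.diag, PauliMat, Matrix.of_apply]
  rw [← Fintype.prod_sum fun i t => pauli (p i) t t]

lemma trace_pauli (a : Fin 4) : (pauli a).trace = if a = 0 then 2 else 0 := by
  fin_cases a <;>
    simp [pauli, Matrix.trace, Matrix.diag, Fin.sum_univ_two, Matrix.vecHead, Matrix.vecTail]

lemma pmul_self (a : Fin 4) : pmul a a = 0 := by revert a; decide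
lemma pmul_comm (a b : Fin 4) : pmul a b = pmul b a := by revert a b; decide
lemma pmul_eq_zero' {a b : Fin 4} (h : pmul a b = 0) : a = b := by revert a b; decide

lemma pphase_self (a : Fin 4) : pphase a a = 1 := by
  fin_cases a <;> norm_num [pphase]

lemma pphase_swap (a b : Fin 4) : pphase b a = sgn a b * pphase a b := by
  fin_cases a <;> fin_cases b <;>
    norm_num [pphase, sgn, Matrix.vecHead, Matrix.vecTail, Fin.ext_iff]

lemma pphase_conj (a b : Fin 4) : pphase b a = (starRingEnd ℂ) (pphase a b) := by
  fin_cases a <;> fin_cases b <;>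
    norm_num [pphase, Matrix.vecHead, Matrix.vecTail, Complex.ext_iff]

lemma xbit_pmul (a b : Fin 4) : xbit (pmul a b) = xbit a + xbit b := by revert a b; decide
lemma zbit_pmul (a b : Fin 4) : zbit (pmul a b) = zbit a + zbit b := by revert a b; decide
lemma bits_zero (a : Fin 4) : xbit a = 0 → zbit a = 0 → a = 0 := by revert a; decide

lemma trace_PauliMat_mul {n : ℕ} (p q : Fin n → Fin 4) :
    (PauliMat p * PauliMat q).trace = if p = q then (2 : ℂ) ^ n else 0 := by
  rw [PauliMat_mul, Matrix.trace_smul, trace_PauliMat]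
  by_cases h : p = q
  · subst h
    simp [pmul_self, trace_pauli, pphase_self, smul_eq_mul]
  · have : ∃ i, p i ≠ q i := by
      by_contra hc; push_neg at hc; exact h (funext hc)
    obtain ⟨i, hi⟩ := this
    rw [if_neg h]
    have h0 : (pauli (pmul (p i) (q i))).trace = 0 := by
      rw [trace_pauli, if_neg (fun hz => hi (pmul_eq_zero' hz))]
    have hz := Finset.prod_eq_zero (f := fun i => (pauli (pmul (p i) (q i))).trace)
      (Finset.mem_univ i) h0
    rw [hz, smul_zero]

lemma pauliMat_li {n : ℕ} : LinearIndependent ℂ (PauliMat (n := n)) := by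
  rw [linearIndependent_iff']
  intro s g hsum q hq
  have h : ((∑ i ∈ s, g i • PauliMat i) * PauliMat q).trace = 0 := by
    rw [hsum, Matrix.zero_mul, Matrix.trace_zero]
  rw [Finset.sum_mul] at h
  simp only [smul_mul_assoc, Matrix.trace_sum, Matrix.trace_smul, trace_PauliMat_mul,
    smul_eq_mul, mul_ite, mul_zero] at h
  rw [Finset.sum_ite_eq' s q (fun i => g i * 2 ^ n), if_pos hq] at h
  exact (mul_eq_zero.mp h).resolve_right (pow_ne_zero n two_ne_zero)

lemma pauliMat_li_R {n : ℕ} :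
    LinearIndependent ℝ (fun p : Fin n → Fin 4 => Complex.I • PauliMat p) := by
  have h1 : LinearIndependent ℝ (PauliMat (n := n)) := by
    refine pauliMat_li.restrict_scalars ?_
    intro a b hab
    simpa using hab
  exact h1.map' (((LinearMap.lsmul ℂ _) Complex.I).restrictScalars ℝ)
    (LinearMap.ker_eq_bot.mpr (smul_right_injective _ Complex.I_ne_zero))

lemma sgn_ZI {a b : Fin 4} (ha : a = 3 ∨ a = 0) (hb : b = 3 ∨ b = 0) : sgn a b = 1 := by
  rcases ha with rfl | rfl <;> rcases hb with rfl | rfl <;> norm_num [sgn]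

lemma w_mul_w {n : ℕ} {x y : Fin n} (h : x ≠ y) : w x y * w y x = -1 := by
  rcases lt_or_gt_of_ne h with h' | h' <;>
    simp [w, h', not_lt_of_gt, le_of_lt, not_lt.mpr (le_of_lt h')]

lemma between_w {n : ℕ} (c e x : Fin n) (hxc : x ≠ c) (hxe : x ≠ e) :
    (if min c e < x ∧ x < max c e then (-1 : ℂ) else 1) = w c x * w e x := by
  have hc : (x : ℕ) ≠ c := fun h => hxc (Fin.ext h)
  have he : (x : ℕ) ≠ e := fun h => hxe (Fin.ext h)
  rcases le_total c e with h | h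
  · rw [min_eq_left h, max_eq_right h]
    simp only [w, Fin.lt_def]
    rw [Fin.le_def] at h
    split_ifs <;> first | (exfalso; omega) | norm_num
  · rw [min_eq_right h, max_eq_left h]
    simp only [w, Fin.lt_def]
    rw [Fin.le_def] at h
    split_ifs <;> first | (exfalso; omega) | norm_num

lemma ladder_left {n : ℕ} (a b : Fin n) (A B : Fin 4) : ladderString a b A B a = A := by
  simp [ladderString]

lemma ladder_right {n : ℕ} {a b : Fin n} (h : b ≠ a) (A B : Fin 4) :
    ladderString a b A B b = B := by simp [ladderString, h]

lemma ladder_other {n : ℕ} {a b m : Fin n} (hma : m ≠ a) (hmb : m ≠ b) (A B : Fin 4) :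
    ladderString a b A B m = if min a b < m ∧ m < max a b then 3 else 0 := by
  simp [ladderString, hma, hmb]

/-- The invariant subset of Pauli strings used to separate the two spin species. -/
def Cv {n N : ℕ} (v : Fin N → Fin n) : Set (Fin n → Fin 4) :=
  {p | ∀ m : Fin n, m ∉ Set.range v →
    xbit (p m) = 0 ∧ zbit (p m) = ∑ j ∈ Finset.univ.filter (fun j => m < j), xbit (p j)}

lemma Cv_pmul {n N : ℕ} {v : Fin N → Fin n} {p q : Fin n → Fin 4}
    (hp : p ∈ Cv v) (hq : q ∈ Cv v) : (fun i => pmul (p i) (q i)) ∈ Cv v := by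
  intro m hm
  obtain ⟨hp1, hp2⟩ := hp m hm
  obtain ⟨hq1, hq2⟩ := hq m hm
  refine ⟨by rw [xbit_pmul, hp1, hq1, add_zero], ?_⟩
  rw [zbit_pmul, hp2, hq2, ← Finset.sum_add_distrib]
  exact Finset.sum_congr rfl fun j _ => (xbit_pmul (p j) (q j)).symm

lemma xbit_ladder {n : ℕ} {a b : Fin n} (hab : a ≠ b) {A : Fin 4} (hA : A = 1 ∨ A = 2)
    (j : Fin n) :
    xbit (ladderString a b A A j) =
      (if j = a then 1 else 0) + (if j = b then 1 else 0) := by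
  by_cases hja : j = a
  · subst hja
    rw [ladder_left, if_pos rfl, if_neg hab]
    rcases hA with rfl | rfl <;> rfl
  · by_cases hjb : j = b
    · subst hjb
      rw [ladder_right (Ne.symm (fun h => hja h.symm)), if_neg hja, if_pos rfl]
      rcases hA with rfl | rfl <;> rfl
    · rw [ladder_other hja hjb, if_neg hja, if_neg hjb]
      split_ifs <;> rfl

lemma ladder_mem_Cv {n N : ℕ} (v : Fin N → Fin n) (k l : Fin N) (hkl : v k ≠ v l)
    (A : Fin 4) (hA : A = 1 ∨ A = 2) : ladderString (v k) (v l) A A ∈ Cv v := by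
  intro m hm
  have hma : m ≠ v k := fun h => hm ⟨k, h.symm⟩
  have hmb : m ≠ v l := fun h => hm ⟨l, h.symm⟩
  constructor
  · rw [ladder_other hma hmb]
    split_ifs <;> rfl
  · have hsum : ∀ j ∈ Finset.univ.filter (fun j => m < j),
        xbit (ladderString (v k) (v l) A A j) =
          (if j = v k then 1 else 0) + (if j = v l then 1 else 0) :=
      fun j _ => xbit_ladder hkl hA j
    rw [Finset.sum_congr rfl hsum, Finset.sum_add_distrib, Finset.sum_ite_eq',
      Finset.sum_ite_eq']
    simp only [Finset.mem_filter, Finset.mem_univ, true_and]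
    rw [ladder_other hma hmb]
    have hc : (m : ℕ) ≠ v k := fun h => hma (Fin.ext h)
    have he : (m : ℕ) ≠ v l := fun h => hmb (Fin.ext h)
    rcases le_total (v k) (v l) with h | h
    · rw [min_eq_left h, max_eq_right h]
      rw [Fin.le_def] at h
      simp only [Fin.lt_def]
      split_ifs <;> first | (exfalso; omega) | rfl
    · rw [min_eq_right h, max_eq_left h]
      rw [Fin.le_def] at h
      simp only [Fin.lt_def]
      split_ifs <;> first | (exfalso; omega) | rfl

section commute
variable {n : ℕ} {a b c e : Fin n} {A B : Fin 4}

lemma sgn_letter_z (hA : A = 1 ∨ A = 2) {z : Fin 4} (hz : z = 3 ∨ z = 0) :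
    sgn A z = (if z = 3 then (-1 : ℂ) else 1) ∧
      sgn z A = (if z = 3 then (-1 : ℂ) else 1) := by
  rcases hA with rfl | rfl <;> rcases hz with rfl | rfl <;> simp +decide [sgn]

lemma prod_sgn_ladder (hab : a ≠ b) (hce : c ≠ e) (hac : a ≠ c) (hae : a ≠ e)
    (hbc : b ≠ c) (hbe : b ≠ e) (hA : A = 1 ∨ A = 2) (hB : B = 1 ∨ B = 2) :
    (∏ i, sgn (ladderString a b A A i) (ladderString c e B B i)) = 1 := by
  set p := ladderString a b A A with hp
  set q := ladderString c e B B with hq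
  have houter : ∀ i ∈ Finset.univ, i ∉ ({a, b, c, e} : Finset (Fin n)) →
      sgn (p i) (q i) = 1 := by
    intro i _ hi
    simp only [Finset.mem_insert, Finset.mem_singleton, not_or] at hi
    obtain ⟨h1, h2, h3, h4⟩ := hi
    have hpz : p i = 3 ∨ p i = 0 := by
      rw [hp, ladder_other h1 h2]; split_ifs <;> simp
    have hqz : q i = 3 ∨ q i = 0 := by
      rw [hq, ladder_other h3 h4]; split_ifs <;> simp
    exact sgn_ZI hpz hqz
  rw [← Finset.prod_subset (Finset.subset_univ ({a, b, c, e} : Finset (Fin n))) houter]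
  have hda : a ∉ ({b, c, e} : Finset (Fin n)) := by simp [hab, hac, hae]
  have hdb : b ∉ ({c, e} : Finset (Fin n)) := by simp [hbc, hbe]
  have hdc : c ∉ ({e} : Finset (Fin n)) := by simp [hce]
  rw [show ({a, b, c, e} : Finset (Fin n)) = insert a (insert b (insert c {e})) from rfl,
    Finset.prod_insert hda, Finset.prod_insert hdb, Finset.prod_insert hdc,
    Finset.prod_singleton]
  have fa : sgn (p a) (q a) = w c a * w e a := by
    rw [hp, ladder_left, hq, ladder_other hac hae,
      show sgn A (if min c e < a ∧ a < max c e then 3 else 0)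
        = (if min c e < a ∧ a < max c e then (-1 : ℂ) else 1) from by
          split_ifs with h <;> exact ((sgn_letter_z hA (by simp)).1.trans (by simp)),
      between_w c e a hac hae]
  have fb : sgn (p b) (q b) = w c b * w e b := by
    rw [hp, ladder_right (Ne.symm hab), hq, ladder_other hbc hbe,
      show sgn A (if min c e < b ∧ b < max c e then 3 else 0)
        = (if min c e < b ∧ b < max c e then (-1 : ℂ) else 1) from by
          split_ifs with h <;> exact ((sgn_letter_z hA (by simp)).1.trans (by simp)),
      between_w c e b hbc hbe]
  have fc : sgn (p c) (q c) = w a c * w b c := by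
    rw [hq, ladder_left, hp, ladder_other (Ne.symm hac) (Ne.symm hbc),
      show sgn (if min a b < c ∧ c < max a b then 3 else 0) B
        = (if min a b < c ∧ c < max a b then (-1 : ℂ) else 1) from by
          split_ifs with h <;> exact ((sgn_letter_z hB (by simp)).2.trans (by simp)),
      between_w a b c (Ne.symm hac) (Ne.symm hbc)]
  have fe : sgn (p e) (q e) = w a e * w b e := by
    rw [hq, ladder_right (Ne.symm hce), hp, ladder_other (Ne.symm hae) (Ne.symm hbe),
      show sgn (if min a b < e ∧ e < max a b then 3 else 0) B
        = (if min a b < e ∧ e < max a b then (-1 : ℂ) else 1) from by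
          split_ifs with h <;> exact ((sgn_letter_z hB (by simp)).2.trans (by simp)),
      between_w a b e (Ne.symm hae) (Ne.symm hbe)]
  rw [fa, fb, fc, fe]
  have h1 := w_mul_w hac
  have h2 := w_mul_w hae
  have h3 := w_mul_w hbc
  have h4 := w_mul_w hbe
  calc w c a * w e a * (w c b * w e b * (w a c * w b c * (w a e * w b e)))
      = (w a c * w c a) * ((w a e * w e a) * ((w b c * w c b) * (w b e * w e b))) := by ring
    _ = 1 := by rw [h1, h2, h3, h4]; norm_num

lemma gen_commute (hab : a ≠ b) (hce : c ≠ e) (hac : a ≠ c) (hae : a ≠ e)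
    (hbc : b ≠ c) (hbe : b ≠ e) (hA : A = 1 ∨ A = 2) (hB : B = 1 ∨ B = 2) :
    Commute (PauliMat (ladderString a b A A)) (PauliMat (ladderString c e B B)) := by
  unfold Commute SemiconjBy
  rw [PauliMat_mul, PauliMat_mul]
  have hstr : (fun i => pmul (ladderString a b A A i) (ladderString c e B B i))
      = fun i => pmul (ladderString c e B B i) (ladderString a b A A i) := by
    funext i; exact pmul_comm _ _
  rw [hstr]
  congr 1
  calc (∏ i, pphase (ladderString a b A A i) (ladderString c e B B i))
      = ∏ i, sgn (ladderString c e B B i) (ladderString a b A A i)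
          * pphase (ladderString c e B B i) (ladderString a b A A i) :=
        Finset.prod_congr rfl fun i _ => pphase_swap _ _
    _ = (∏ i, sgn (ladderString c e B B i) (ladderString a b A A i))
          * ∏ i, pphase (ladderString c e B B i) (ladderString a b A A i) :=
        Finset.prod_mul_distrib
    _ = ∏ i, pphase (ladderString c e B B i) (ladderString a b A A i) := by
        rw [prod_sgn_ladder hce hab (Ne.symm hac) (Ne.symm hbc) (Ne.symm hae) (Ne.symm hbe)
          hB hA, one_mul]
end commute

lemma bracket_IP {n : ℕ} (p q : Fin n → Fin 4) :
    ⁅Complex.I • PauliMat p, Complex.I • PauliMat q⁆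
      = (-2 * (∏ i, pphase (p i) (q i)).im : ℝ) •
          (Complex.I • PauliMat fun i => pmul (p i) (q i)) := by
  have hc : (∏ i, pphase (q i) (p i)) = (starRingEnd ℂ) (∏ i, pphase (p i) (q i)) := by
    rw [map_prod]; exact Finset.prod_congr rfl fun i _ => pphase_conj _ _
  have hstr : (fun i => pmul (q i) (p i)) = (fun i => pmul (p i) (q i)) := by
    funext i; exact pmul_comm _ _
  set c := ∏ i, pphase (p i) (q i) with hcdef
  set R := PauliMat fun i => pmul (p i) (q i) with hRdef
  have h1 : Complex.I • PauliMat p * (Complex.I • PauliMat q) = (-c) • R := by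
    rw [smul_mul_assoc, mul_smul_comm, PauliMat_mul, smul_smul, smul_smul, ← hcdef,
      Complex.I_mul_I, neg_one_mul]
  have h2 : Complex.I • PauliMat q * (Complex.I • PauliMat p) = (-(starRingEnd ℂ) c) • R := by
    rw [smul_mul_assoc, mul_smul_comm, PauliMat_mul, smul_smul, smul_smul, hc, hstr,
      Complex.I_mul_I, neg_one_mul]
  rw [Ring.lie_def, h1, h2, ← sub_smul]
  have hs : -c - -(starRingEnd ℂ) c = ((-2 * c.im : ℝ) : ℂ) * Complex.I := by
    rw [show -c - -(starRingEnd ℂ) c = -(c - (starRingEnd ℂ) c) from by ring,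
      Complex.sub_conj]
    push_cast
    ring
  rw [hs, mul_smul, Complex.coe_smul]

/-- The Lie centralizer of a set of matrices. -/
def centL {n : ℕ} (T : Set (Matrix (Fin n → Fin 2) (Fin n → Fin 2) ℂ)) :
    LieSubalgebra ℝ (Matrix (Fin n → Fin 2) (Fin n → Fin 2) ℂ) where
  carrier := {x | ∀ t ∈ T, Commute x t}
  add_mem' := fun {x y} hx hy t ht => (hx t ht).add_left (hy t ht)
  zero_mem' := fun t _ => Commute.zero_left t
  smul_mem' := fun c x hx t ht => (hx t ht).smul_left c
  lie_mem' := fun {x y} hx hy t ht => by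
    rw [Ring.lie_def]
    exact ((hx t ht).mul_left (hy t ht)).sub_left ((hy t ht).mul_left (hx t ht))

lemma mem_centL {n : ℕ} {T : Set (Matrix (Fin n → Fin 2) (Fin n → Fin 2) ℂ)}
    {x : Matrix (Fin n → Fin 2) (Fin n → Fin 2) ℂ} :
    x ∈ centL T ↔ ∀ t ∈ T, Commute x t := Iff.rfl

lemma commute_lieSpan {n : ℕ} (s t : Set (Matrix (Fin n → Fin 2) (Fin n → Fin 2) ℂ))
    (h : ∀ a ∈ s, ∀ b ∈ t, Commute a b) :
    ∀ x ∈ LieSubalgebra.lieSpan ℝ _ s, ∀ y ∈ LieSubalgebra.lieSpan ℝ _ t, Commute x y := by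
  have h1 : LieSubalgebra.lieSpan ℝ _ s ≤ centL t :=
    LieSubalgebra.lieSpan_le.mpr fun a ha => mem_centL.mpr (h a ha)
  have h2 : LieSubalgebra.lieSpan ℝ _ t ≤
      centL (LieSubalgebra.lieSpan ℝ (Matrix (Fin n → Fin 2) (Fin n → Fin 2) ℂ) s : Set _) :=
    LieSubalgebra.lieSpan_le.mpr fun b hb =>
      mem_centL.mpr fun x hx => ((h1 hx) b hb).symm
  intro x hx y hy
  exact ((h2 hy) x hx).symm

lemma span_bracket {n : ℕ} (D : Set (Fin n → Fin 4))
    (hD : ∀ p ∈ D, ∀ q ∈ D, p ≠ q → (fun i => pmul (p i) (q i)) ∈ D) :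
    ∀ x ∈ Submodule.span ℝ ((fun p => Complex.I • PauliMat p) '' D),
    ∀ y ∈ Submodule.span ℝ ((fun p => Complex.I • PauliMat p) '' D),
      ⁅x, y⁆ ∈ Submodule.span ℝ ((fun p => Complex.I • PauliMat p) '' D) := by
  intro x hx y hy
  induction hx, hy using Submodule.span_induction₂ with
  | mem_mem a b ha hb =>
      obtain ⟨p, hp, rfl⟩ := ha; obtain ⟨q, hq, rfl⟩ := hb
      by_cases hpq : p = q
      · subst hpq; rw [lie_self]; exact Submodule.zero_mem _
      · rw [bracket_IP]
        exact Submodule.smul_mem _ _ (Submodule.subset_span ⟨_, hD p hp q hq hpq, rfl⟩)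
  | zero_left y hy => rw [zero_lie]; exact Submodule.zero_mem _
  | zero_right x hx => rw [lie_zero]; exact Submodule.zero_mem _
  | add_left x y z hx hy hz h1 h2 => rw [add_lie]; exact Submodule.add_mem _ h1 h2
  | add_right x y z hx hy hz h1 h2 => rw [lie_add]; exact Submodule.add_mem _ h1 h2
  | smul_left r x y hx hy h => rw [smul_lie]; exact Submodule.smul_mem _ _ h
  | smul_right r x y hx hy h => rw [lie_smul]; exact Submodule.smul_mem _ _ h

/-- The invariant generator set with the identity string removed. -/
def Dv {n N : ℕ} (v : Fin N → Fin n) : Set (Fin n → Fin 4) :=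
  Cv v \ {fun _ => 0}

lemma Dv_closed {n N : ℕ} (v : Fin N → Fin n) :
    ∀ p ∈ Dv v, ∀ q ∈ Dv v, p ≠ q → (fun i => pmul (p i) (q i)) ∈ Dv v := by
  rintro p ⟨hp, _⟩ q ⟨hq, _⟩ hpq
  refine ⟨Cv_pmul hp hq, fun hz => hpq ?_⟩
  exact funext fun i => pmul_eq_zero' (congrFun (Set.mem_singleton_iff.mp hz) i)

/-- The spanning Lie subalgebra bounding one spin species. -/
noncomputable def Wv {n N : ℕ} (v : Fin N → Fin n) :
    LieSubalgebra ℝ (Matrix (Fin n → Fin 2) (Fin n → Fin 2) ℂ) :=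
  { Submodule.span ℝ ((fun p => Complex.I • PauliMat p) '' Dv v) with
    lie_mem' := fun {x y} hx hy => span_bracket (Dv v) (Dv_closed v) x hx y hy }

lemma mem_Wv {n N : ℕ} {v : Fin N → Fin n} {x : Matrix (Fin n → Fin 2) (Fin n → Fin 2) ℂ} :
    x ∈ Wv v ↔ x ∈ Submodule.span ℝ ((fun p => Complex.I • PauliMat p) '' Dv v) := Iff.rfl

lemma hamAlg_le_Wv {N : ℕ} (G : SimpleGraph (Fin N)) (v : Fin N → Fin (2 * N))
    (hv : Function.Injective v) : hamAlg (Sspin G v) ≤ Wv v := by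
  apply LieSubalgebra.lieSpan_le.mpr
  rintro _ ⟨p, ⟨k, l, hkl, hp⟩, rfl⟩
  have hne : v k ≠ v l := fun h => hkl.ne (hv h)
  have hpD : p ∈ Dv v := by
    constructor
    · rcases hp with rfl | rfl
      · exact ladder_mem_Cv v k l hne 1 (Or.inl rfl)
      · exact ladder_mem_Cv v k l hne 2 (Or.inr rfl)
    · intro hz
      have hzz := congrFun (Set.mem_singleton_iff.mp hz) (v k)
      rcases hp with rfl | rfl <;> rw [ladder_left] at hzz <;> exact absurd hzz (by decide)
  exact Submodule.subset_span ⟨p, hpD, rfl⟩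

lemma Cv_inter {n N : ℕ} {u d : Fin N → Fin n} {p : Fin n → Fin 4}
    (hcover : ∀ m : Fin n, m ∉ Set.range u ∨ m ∉ Set.range d)
    (hpu : p ∈ Cv u) (hpd : p ∈ Cv d) : p = fun _ => 0 := by
  have hx : ∀ m, xbit (p m) = 0 := fun m => by
    rcases hcover m with h | h
    · exact (hpu m h).1
    · exact (hpd m h).1
  have hz : ∀ m, zbit (p m) = 0 := by
    intro m
    have hsum0 : (∑ j ∈ Finset.univ.filter (fun j => m < j), xbit (p j)) = 0 :=
      Finset.sum_eq_zero fun j _ => hx j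
    rcases hcover m with h | h
    · rw [(hpu m h).2, hsum0]
    · rw [(hpd m h).2, hsum0]
  exact funext fun m => bits_zero (p m) (hx m) (hz m)

/-- Spin decoupling of the free-fermion Hamiltonian algebra: the spin-up and spin-down
algebras commute elementwise, jointly generate the full Hamiltonian algebra, intersect
trivially, and the dimensions add up. -/
theorem hamAlg_free_fermion_spin_decoupling (N : ℕ) (hN : 1 ≤ N)
    (G : SimpleGraph (Fin N)) (hG : G.Connected)
    (u d : Fin N → Fin (2 * N)) (hu : Function.Injective u) (hd : Function.Injective d)
    (hdisj : Disjoint (Set.range u) (Set.range d))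
    (hunion : Set.range u ∪ Set.range d = Set.univ) :
    (∀ x ∈ hamAlg (Sspin G u), ∀ y ∈ hamAlg (Sspin G d), Commute x y) ∧
    hamAlg (Sfree G u d) = hamAlg (Sspin G u) ⊔ hamAlg (Sspin G d) ∧
    hamAlg (Sspin G u) ⊓ hamAlg (Sspin G d) = ⊥ ∧
    Module.finrank ℝ (hamAlg (Sfree G u d)) =
      Module.finrank ℝ (hamAlg (Sspin G u)) +
      Module.finrank ℝ (hamAlg (Sspin G d)) := by
  classical
  have hud : ∀ (k k' : Fin N), u k ≠ d k' := by
    intro k k' h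
    exact Set.disjoint_left.mp hdisj ⟨k, rfl⟩ ⟨k', h.symm⟩
  -- Part 1: elementwise commutation
  have hgen : ∀ x ∈ (fun p => Complex.I • PauliMat p) '' Sspin G u,
      ∀ y ∈ (fun p => Complex.I • PauliMat p) '' Sspin G d, Commute x y := by
    rintro _ ⟨p, ⟨k, l, hkl, hp⟩, rfl⟩ _ ⟨q, ⟨k', l', hkl', hq⟩, rfl⟩
    have h1 : u k ≠ u l := fun h => hkl.ne (hu h)
    have h2 : d k' ≠ d l' := fun h => hkl'.ne (hd h)
    have commPQ : Commute (PauliMat p) (PauliMat q) := by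
      rcases hp with rfl | rfl <;> rcases hq with rfl | rfl
      · exact gen_commute h1 h2 (hud k k') (hud k l') (hud l k') (hud l l')
          (Or.inl rfl) (Or.inl rfl)
      · exact gen_commute h1 h2 (hud k k') (hud k l') (hud l k') (hud l l')
          (Or.inl rfl) (Or.inr rfl)
      · exact gen_commute h1 h2 (hud k k') (hud k l') (hud l k') (hud l l')
          (Or.inr rfl) (Or.inl rfl)
      · exact gen_commute h1 h2 (hud k k') (hud k l') (hud l k') (hud l l')
          (Or.inr rfl) (Or.inr rfl)
    exact (commPQ.smul_left Complex.I).smul_right Complex.I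
  have part1 : ∀ x ∈ hamAlg (Sspin G u), ∀ y ∈ hamAlg (Sspin G d), Commute x y :=
    commute_lieSpan _ _ hgen
  -- Part 2: the sup formula
  have part2 : hamAlg (Sfree G u d) = hamAlg (Sspin G u) ⊔ hamAlg (Sspin G d) := by
    unfold hamAlg Sfree
    rw [Set.image_union]
    exact (LieSubalgebra.gi ℝ _).gc.l_sup
  -- Part 3: trivial intersection
  have hcover : ∀ m : Fin (2 * N), m ∉ Set.range u ∨ m ∉ Set.range d := by
    intro m
    by_cases h : m ∈ Set.range u
    · exact Or.inr (Set.disjoint_left.mp hdisj h)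
    · exact Or.inl h
  have hDdisj : Disjoint (Dv u) (Dv d) := by
    rw [Set.disjoint_left]
    rintro p ⟨hpu, hpz⟩ ⟨hpd, _⟩
    exact hpz (Set.mem_singleton_iff.mpr (Cv_inter hcover hpu hpd))
  have part3 : hamAlg (Sspin G u) ⊓ hamAlg (Sspin G d) = ⊥ := by
    rw [eq_bot_iff]
    intro x hx
    have hxu : x ∈ Submodule.span ℝ ((fun p => Complex.I • PauliMat p) '' Dv u) :=
      mem_Wv.mp (hamAlg_le_Wv G u hu hx.1)
    have hxd : x ∈ Submodule.span ℝ ((fun p => Complex.I • PauliMat p) '' Dv d) :=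
      mem_Wv.mp (hamAlg_le_Wv G d hd hx.2)
    have hx0 : x = 0 := Submodule.disjoint_def.mp
      (pauliMat_li_R.disjoint_span_image hDdisj) x hxu hxd
    simp [hx0]
  refine ⟨part1, part2, part3, ?_⟩
  -- Part 4: dimensions add
  set A := hamAlg (Sspin G u) with hA
  set B := hamAlg (Sspin G d) with hB
  have hKlie : ∀ x ∈ (A.toSubmodule ⊔ B.toSubmodule : Submodule ℝ _),
      ∀ y ∈ (A.toSubmodule ⊔ B.toSubmodule : Submodule ℝ _),
        ⁅x, y⁆ ∈ (A.toSubmodule ⊔ B.toSubmodule : Submodule ℝ _) := by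
    intro x hx y hy
    obtain ⟨a, ha, b, hb, rfl⟩ := Submodule.mem_sup.mp hx
    obtain ⟨a', ha', b', hb', rfl⟩ := Submodule.mem_sup.mp hy
    have hab' : ⁅a, b'⁆ = 0 :=
      (part1 a (A.mem_toSubmodule.mp ha) b' (B.mem_toSubmodule.mp hb')).lie_eq
    have hba' : ⁅b, a'⁆ = 0 :=
      ((part1 a' (A.mem_toSubmodule.mp ha') b (B.mem_toSubmodule.mp hb)).symm).lie_eq
    rw [add_lie, lie_add, lie_add, hab', hba', add_zero, zero_add]
    exact Submodule.add_mem _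
      (Submodule.mem_sup_left (A.lie_mem (A.mem_toSubmodule.mp ha) (A.mem_toSubmodule.mp ha')))
      (Submodule.mem_sup_right (B.lie_mem (B.mem_toSubmodule.mp hb) (B.mem_toSubmodule.mp hb')))
  let K : LieSubalgebra ℝ (Matrix (Fin (2 * N) → Fin 2) (Fin (2 * N) → Fin 2) ℂ) :=
    { (A.toSubmodule ⊔ B.toSubmodule : Submodule ℝ _) with
      lie_mem' := fun {x y} hx hy => hKlie x hx y hy }
  have hmemK : ∀ x, x ∈ K ↔ x ∈ (A.toSubmodule ⊔ B.toSubmodule : Submodule ℝ _) :=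
    fun x => Iff.rfl
  have hABK : A ⊔ B = K := by
    apply le_antisymm
    · exact sup_le (fun x hx => (hmemK x).mpr (Submodule.mem_sup_left hx))
        (fun x hx => (hmemK x).mpr (Submodule.mem_sup_right hx))
    · intro x hx
      obtain ⟨a, ha, b, hb, rfl⟩ := Submodule.mem_sup.mp ((hmemK x).mp hx)
      exact add_mem ((le_sup_left : A ≤ A ⊔ B) ha) ((le_sup_right : B ≤ A ⊔ B) hb)
  have hinf0 : A.toSubmodule ⊓ B.toSubmodule = ⊥ := by
    rw [eq_bot_iff]
    intro x hx
    have : x ∈ A ⊓ B := ⟨(Submodule.mem_inf.mp hx).1, (Submodule.mem_inf.mp hx).2⟩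
    rw [part3] at this
    simpa using this
  have hdim := Submodule.finrank_sup_add_finrank_inf_eq A.toSubmodule B.toSubmodule
  rw [hinf0, finrank_bot, add_zero] at hdim
  have hfinK : Module.finrank ℝ K = Module.finrank ℝ (A.toSubmodule ⊔ B.toSubmodule : Submodule ℝ _) := rfl
  rw [part2, hABK, hfinK, hdim]
  rfl
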